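/- arXiv:2007.03821 — 2 statements merged into one kernel-verified Lean document; each statement's English description precedes it below -/
import Mathlib

section
/- The ordinary generating function Y(x) = Σ_{n≥0} a_n x^n of the maximal run numbers satisfies (1−x)^2 (1+x) · Y(x) = x as an identity of formal power series over ℚ (equivalently, Y(x) = x/((1−x)^2(1+x))). -/
open Finset

/-- The word of a permutation `σ` of `Fin n`: the letter at (0-based) position `i`,
viewed as a natural number (the letters are `0, 1, ..., n-1`, identified with the usual
letters `1, ..., n`); junk value `0` outside the range. -/
def entry {n : ℕ} (σ : Equiv.Perm (Fin n)) (i : ℕ) : ℕ :=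
  if h : i < n then (σ ⟨i, h⟩ : ℕ) else 0

/-- Position `i` starts a run of the word `w`: either `i = 0`, or there is a
descent at position `i - 1`. -/
def WordRunStart (w : ℕ → ℕ) (i : ℕ) : Prop :=
  i = 0 ∨ w i < w (i - 1)

instance (w : ℕ → ℕ) (i : ℕ) : Decidable (WordRunStart w i) :=
  inferInstanceAs (Decidable (i = 0 ∨ w i < w (i - 1)))

/-- The number of runs of the length-`m` word `w` (maximal consecutive increasing subwords). -/
def wordRuns (w : ℕ → ℕ) (m : ℕ) : ℕ :=
  ((Finset.range m).filter fun i => WordRunStart w i).card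

/-- The length-`m` word `w` is flattened: the first entries of its runs,
read from left to right, increase. -/
def WordFlattened (w : ℕ → ℕ) (m : ℕ) : Prop :=
  ∀ i < m, ∀ j < m, WordRunStart w i → WordRunStart w j → i < j → w i < w j

instance (w : ℕ → ℕ) (m : ℕ) : Decidable (WordFlattened w m) :=
  inferInstanceAs (Decidable (∀ i < m, ∀ j < m,
    WordRunStart w i → WordRunStart w j → i < j → w i < w j))

/-- Position `i` (0-based) starts a run of the permutation `σ`. -/
def IsRunStart {n : ℕ} (σ : Equiv.Perm (Fin n)) (i : ℕ) : Prop :=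
  i < n ∧ WordRunStart (entry σ) i

instance {n : ℕ} (σ : Equiv.Perm (Fin n)) (i : ℕ) : Decidable (IsRunStart σ i) :=
  inferInstanceAs (Decidable (i < n ∧ WordRunStart (entry σ) i))

/-- The number of runs of the permutation `σ`. -/
def runCount {n : ℕ} (σ : Equiv.Perm (Fin n)) : ℕ :=
  wordRuns (entry σ) n

/-- `σ` is a flattened partition. -/
def IsFlattened {n : ℕ} (σ : Equiv.Perm (Fin n)) : Prop :=
  WordFlattened (entry σ) n

instance {n : ℕ} (σ : Equiv.Perm (Fin n)) : Decidable (IsFlattened σ) :=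
  inferInstanceAs (Decidable (WordFlattened (entry σ) n))

/-- `flatSet n k`: the set `F_{n,k}` of flattened partitions over `[n]` with exactly `k` runs. -/
def flatSet (n k : ℕ) : Finset (Equiv.Perm (Fin n)) :=
  Finset.univ.filter fun σ => IsFlattened σ ∧ runCount σ = k

/-- `f n k = |F_{n,k}|`, the number of flattened partitions over `[n]` with exactly `k` runs. -/
def f (n k : ℕ) : ℕ := (flatSet n k).card

/-- `a n`: the maximal number of runs of a flattened partition over `[n]` (with `a 0 = 0`,
since the empty permutation has no runs). -/
def a (n : ℕ) : ℕ :=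
  (Finset.univ.filter fun σ : Equiv.Perm (Fin n) => IsFlattened σ).sup runCount

/-- The witness word: `0, 2, 1, 4, 3, 6, 5, ...` (truncated at `n-1`). -/
def gw (n i : ℕ) : ℕ :=
  if i = 0 then 0 else if i % 2 = 1 then min (i + 1) (n - 1) else i - 1

lemma gw_lt (n : ℕ) (i : ℕ) (hi : i < n) : gw n i < n := by
  unfold gw; split_ifs <;> omega

lemma gw_invol (n : ℕ) (i : ℕ) (hi : i < n) : gw n (gw n i) = i := by
  unfold gw; split_ifs <;> omega

/-- The witness permutation. -/
def gperm (n : ℕ) : Equiv.Perm (Fin n) :=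
  Function.Involutive.toPerm (fun i => ⟨gw n i, gw_lt n i i.2⟩)
    (fun i => Fin.ext (gw_invol n i i.2))

lemma entry_gperm (n : ℕ) (i : ℕ) (hi : i < n) : entry (gperm n) i = gw n i := by
  simp [entry, hi, gperm, Function.Involutive.toPerm]

lemma gperm_runstart (n : ℕ) (i : ℕ) (hi : i < n) :
    WordRunStart (entry (gperm n)) i ↔ i % 2 = 0 := by
  rcases Nat.eq_zero_or_pos i with rfl | hpos
  · simp [WordRunStart]
  have h1 : i - 1 < n := by omega
  unfold WordRunStart
  rw [entry_gperm n i hi, entry_gperm n (i-1) h1]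
  unfold gw
  split_ifs <;> omega

lemma gperm_flattened (n : ℕ) : IsFlattened (gperm n) := by
  intro i hi j hj hri hrj hij
  have hei : i % 2 = 0 := (gperm_runstart n i hi).1 hri
  have hej : j % 2 = 0 := (gperm_runstart n j hj).1 hrj
  rw [entry_gperm n i hi, entry_gperm n j hj]
  unfold gw
  split_ifs <;> omega

lemma card_even_range (n : ℕ) :
    ((Finset.range n).filter fun i => i % 2 = 0).card = (n + 1) / 2 := by
  induction n with
  | zero => simp
  | succ m ih =>
    rw [Finset.range_add_one, Finset.filter_insert]
    split_ifs with h
    · rw [Finset.card_insert_of_notMem (by simp), ih]; omega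
    · rw [ih]; omega

lemma runCount_gperm (n : ℕ) : runCount (gperm n) = (n + 1) / 2 := by
  unfold runCount wordRuns
  rw [← card_even_range n]
  apply congrArg Finset.card
  apply Finset.filter_congr
  intro i hi
  rw [Finset.mem_range] at hi
  simp [gperm_runstart n i hi]

lemma no_consec_runstart {n : ℕ} {σ : Equiv.Perm (Fin n)} (h : IsFlattened σ) {i : ℕ}
    (hi : i < n) (hi1 : i + 1 < n) (h0 : WordRunStart (entry σ) i)
    (h1 : WordRunStart (entry σ) (i + 1)) : False := by
  have hlt := h i hi (i + 1) hi1 h0 h1 (Nat.lt_succ_self i)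
  rcases h1 with h1 | h1
  · omega
  · simp only [Nat.add_sub_cancel] at h1; omega

lemma runCount_le_of_flattened {n : ℕ} {σ : Equiv.Perm (Fin n)} (h : IsFlattened σ) :
    runCount σ ≤ (n + 1) / 2 := by
  have key : ∀ p ∈ (Finset.range n).filter (fun i => WordRunStart (entry σ) i),
      ∀ q ∈ (Finset.range n).filter (fun i => WordRunStart (entry σ) i),
      p < q → p / 2 = q / 2 → False := by
    intro p hp q hq hpq heq
    simp only [Finset.mem_filter, Finset.mem_range] at hp hq
    have : q = p + 1 := by omega
    subst this
    exact no_consec_runstart h hp.1 hq.1 hp.2 hq.2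
  have := Finset.card_le_card_of_injOn (fun i => i / 2)
    (s := (Finset.range n).filter (fun i => WordRunStart (entry σ) i))
    (t := Finset.range ((n + 1) / 2))
    (fun i hi => by
      have h1 : i < n := Finset.mem_range.1 (Finset.mem_filter.1 hi).1
      rw [Finset.mem_coe, Finset.mem_range]
      show i / 2 < (n + 1) / 2
      omega)
    (fun p hp q hq hpq => by
      by_contra hne
      rcases lt_or_gt_of_ne hne with hlt | hlt
      · exact key p hp q hq hlt hpq
      · exact key q hq p hp hlt hpq.symm)
  simpa [runCount, wordRuns] using this

lemma a_eq (n : ℕ) : a n = (n + 1) / 2 := by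
  apply le_antisymm
  · apply Finset.sup_le
    intro σ hσ
    rw [Finset.mem_filter] at hσ
    exact runCount_le_of_flattened hσ.2
  · rw [← runCount_gperm n]
    exact Finset.le_sup (by simp [gperm_flattened n])

/-- The ordinary generating function `Y(x) = Σ_{n ≥ 0} a_n x^n` of the maximal run numbers
satisfies `(1 - x)^2 (1 + x) ⬝ Y(x) = x` as formal power series over `ℚ`. -/
theorem a_generating_function :
    ((1 - PowerSeries.X) ^ 2 * (1 + PowerSeries.X)) *
      PowerSeries.mk (fun n => (a n : ℚ)) = PowerSeries.X := by
  have hfactor : ((1 - PowerSeries.X) ^ 2 * (1 + PowerSeries.X) : PowerSeries ℚ)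
      = 1 - PowerSeries.X ^ 1 - PowerSeries.X ^ 2 + PowerSeries.X ^ 3 := by ring
  rw [hfactor]
  ext n
  simp only [sub_mul, add_mul, one_mul, map_add, map_sub, PowerSeries.coeff_X_pow_mul',
    PowerSeries.coeff_mk, PowerSeries.coeff_X, a_eq]
  rcases n with _ | _ | _ | m
  · norm_num
  · norm_num
  · norm_num
  · rw [if_pos (show (1:ℕ) ≤ m + 1 + 1 + 1 by omega),
      if_pos (show (2:ℕ) ≤ m + 1 + 1 + 1 by omega),
      if_pos (show (3:ℕ) ≤ m + 1 + 1 + 1 by omega),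
      if_neg (show ¬ (m + 1 + 1 + 1 = 1) by omega)]
    have e1 : (m + 1 + 1 + 1 + 1) / 2 = (m + 1 + 1 + 1 - 2 + 1) / 2 + 1 := by omega
    have e2 : (m + 1 + 1 + 1 - 1 + 1) / 2 = (m + 1 + 1 + 1 - 3 + 1) / 2 + 1 := by omega
    rw [e1, e2]
    push_cast
    ring
end

section
/- For all integers n and k with 2 ≤ k < n, the cardinality of the set C_{n,k} equals (n−2) · f_{n−2, k−1}. -/
open Finset

/-- `Cset n k`: the set `C_{n,k}` of flattened partitions over `[n]` with exactly `k` runs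
whose first run consists of exactly two elements (position `1` is not a run start, but
position `2` is), i.e. those of the form `1 X 2 ⋯` with `X ∈ {3, …, n}`. -/
def Cset (n k : ℕ) : Finset (Equiv.Perm (Fin n)) :=
  (flatSet n k).filter fun σ => ¬ IsRunStart σ 1 ∧ IsRunStart σ 2

def liftV (X v : ℕ) : ℕ := if v + 1 < X then v + 1 else v + 2
def unliftV (X w : ℕ) : ℕ := if w < X then w - 1 else w - 2

lemma liftV_lt_iff (X : ℕ) {v v' : ℕ} : liftV X v < liftV X v' ↔ v < v' := by
  unfold liftV; split_ifs <;> omega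

lemma liftV_inj (X : ℕ) {v v' : ℕ} (h : liftV X v = liftV X v') : v = v' := by
  unfold liftV at h; split at h <;> split at h <;> omega

lemma liftV_pos (X v : ℕ) : 1 ≤ liftV X v := by unfold liftV; split_ifs <;> omega

lemma liftV_ne (X v : ℕ) : liftV X v ≠ X := by unfold liftV; split_ifs <;> omega

lemma unliftV_liftV (X v : ℕ) : unliftV X (liftV X v) = v := by
  unfold liftV unliftV; split_ifs <;> omega

lemma liftV_unliftV {X w : ℕ} (hX : 2 ≤ X) (h1 : 1 ≤ w) (h2 : w ≠ X) : liftV X (unliftV X w) = w := by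
  unfold liftV unliftV; split_ifs <;> omega

lemma unliftV_lt_iff {X w w' : ℕ} (hX : 2 ≤ X) (h1 : 1 ≤ w) (h2 : w ≠ X) (h1' : 1 ≤ w') (h2' : w' ≠ X) :
    unliftV X w < unliftV X w' ↔ w < w' := by
  unfold unliftV; split_ifs <;> omega

lemma unliftV_one {X : ℕ} (h : 2 ≤ X) : unliftV X 1 = 0 := by unfold unliftV; split_ifs <;> omega

lemma unliftV_pos {X w : ℕ} (hX : 2 ≤ X) (h2 : 2 ≤ w) (hne : w ≠ X) : 1 ≤ unliftV X w := by
  unfold unliftV; split_ifs <;> omega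

-- entry lemmas
lemma entry_lt {n : ℕ} (hn : 0 < n) (σ : Equiv.Perm (Fin n)) (i : ℕ) : entry σ i < n := by
  unfold entry; split
  · exact (σ _).isLt
  · exact hn

lemma entry_eq {n : ℕ} (σ : Equiv.Perm (Fin n)) {i : ℕ} (h : i < n) :
    entry σ i = (σ ⟨i, h⟩ : ℕ) := dif_pos h

lemma entry_inj {n : ℕ} (σ : Equiv.Perm (Fin n)) {i j : ℕ} (hi : i < n) (hj : j < n)
    (h : entry σ i = entry σ j) : i = j := by
  rw [entry_eq σ hi, entry_eq σ hj] at h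
  have := σ.injective (Fin.val_injective h)
  exact congrArg Fin.val this

lemma entry_surj {n : ℕ} (σ : Equiv.Perm (Fin n)) {v : ℕ} (hv : v < n) :
    ∃ i < n, entry σ i = v := by
  refine ⟨(σ.symm ⟨v, hv⟩ : ℕ), (σ.symm ⟨v, hv⟩).isLt, ?_⟩
  rw [entry_eq σ (σ.symm ⟨v, hv⟩).isLt]
  simp

lemma flat_entry_zero {n : ℕ} (hn : 0 < n) {σ : Equiv.Perm (Fin n)}
    (hf : IsFlattened σ) : entry σ 0 = 0 := by
  obtain ⟨j, hj, hval⟩ := entry_surj σ hn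
  rcases Nat.eq_zero_or_pos j with rfl | hj0
  · exact hval
  · exfalso
    have hstart : WordRunStart (entry σ) j := by
      right
      rw [hval]
      have hne : entry σ (j-1) ≠ 0 := fun h => by
        have := entry_inj σ (by omega) hj (h.trans hval.symm); omega
      omega
    have := hf 0 hn j hj (Or.inl rfl) hstart hj0
    omega

lemma cset_entries {n : ℕ} (hn : 3 ≤ n) {σ : Equiv.Perm (Fin n)}
    (hf : IsFlattened σ) (h2 : entry σ 2 < entry σ 1) :
    entry σ 2 = 1 ∧ 2 ≤ entry σ 1 := by
  have h0 : entry σ 0 = 0 := flat_entry_zero (by omega) hf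
  have h2s : WordRunStart (entry σ) 2 := Or.inr h2
  have h2pos : 0 < entry σ 2 := by
    have := hf 0 (by omega) 2 (by omega) (Or.inl rfl) h2s (by omega)
    omega
  have h21 : entry σ 2 = 1 := by
    obtain ⟨j, hj, hval⟩ := entry_surj σ (show 1 < n by omega)
    have hj0 : j ≠ 0 := fun h => by rw [h, h0] at hval; omega
    have hj1 : j ≠ 1 := fun h => by rw [h] at hval; omega
    rcases Nat.lt_trichotomy j 2 with h | h | h
    · omega
    · rw [h] at hval; exact hval
    · exfalso
      have hjs : WordRunStart (entry σ) j := by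
        right
        have hne0 : entry σ (j-1) ≠ 0 := fun hh => by
          have := entry_inj σ (by omega) (by omega) (hh.trans h0.symm); omega
        have hne1 : entry σ (j-1) ≠ 1 := fun hh => by
          have := entry_inj σ (by omega) hj (hh.trans hval.symm); omega
        omega
      have := hf 2 (by omega) j hj h2s hjs h
      omega
  exact ⟨h21, by omega⟩

lemma wordRuns_succ {w u : ℕ → ℕ} {m : ℕ}
    (h1 : ¬ WordRunStart w 1) (h2 : WordRunStart w 2)
    (hcorr : ∀ i, 1 ≤ i → i < m → (WordRunStart u i ↔ WordRunStart w (i+2))) :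
    wordRuns w (m+2) = wordRuns u m + 1 := by
  have hset : (Finset.range (m+2)).filter (fun i => WordRunStart w i)
      = insert 0 (((Finset.range m).filter (fun i => WordRunStart u i)).image (· + 2)) := by
    ext p
    simp only [Finset.mem_insert, Finset.mem_image, Finset.mem_filter, Finset.mem_range]
    constructor
    · rintro ⟨hp, hps⟩
      by_cases hp0 : p = 0
      · exact Or.inl hp0
      · right
        have hp1 : p ≠ 1 := fun h => h1 (h ▸ hps)
        refine ⟨p - 2, ⟨by omega, ?_⟩, by omega⟩
        by_cases hq : p = 2
        · have h02 : p - 2 = 0 := by omega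
          rw [h02]; exact Or.inl rfl
        · apply (hcorr (p-2) (by omega) (by omega)).mpr
          have hpp : p - 2 + 2 = p := by omega
          rw [hpp]; exact hps
    · rintro (rfl | ⟨i, ⟨hi, his⟩, rfl⟩)
      · exact ⟨by omega, Or.inl rfl⟩
      · refine ⟨by omega, ?_⟩
        by_cases hi0 : i = 0
        · subst hi0; exact h2
        · exact (hcorr i (by omega) hi).mp his
  have h0not : (0:ℕ) ∉ (((Finset.range m).filter fun i => WordRunStart u i).image (· + 2)) := by
    simp only [Finset.mem_image]
    rintro ⟨i, _, h⟩
    omega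
  have hinj : Function.Injective (· + 2 : ℕ → ℕ) := fun a b h => Nat.add_right_cancel h
  rw [wordRuns, wordRuns, hset, Finset.card_insert_of_notMem h0not,
    Finset.card_image_of_injective _ hinj]

def bFun {m : ℕ} (x : Fin m) (τ : Equiv.Perm (Fin m)) (p : Fin (m+2)) : Fin (m+2) :=
  if (p:ℕ) = 0 then ⟨0, by omega⟩
  else if (p:ℕ) = 1 then ⟨(x:ℕ)+2, by have := x.isLt; omega⟩
  else ⟨liftV ((x:ℕ)+2) (τ ⟨(p:ℕ)-2, by have := p.isLt; have := x.isLt; omega⟩), by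
    have := (τ ⟨(p:ℕ)-2, by have := p.isLt; have := x.isLt; omega⟩).isLt
    unfold liftV; split_ifs <;> omega⟩

lemma bFun_injective {m : ℕ} (x : Fin m) (τ : Equiv.Perm (Fin m)) :
    Function.Injective (bFun x τ) := by
  intro p q h
  have h' : ((bFun x τ p : Fin (m+2)) : ℕ) = ((bFun x τ q : Fin (m+2)) : ℕ) := congrArg _ h
  unfold bFun at h'
  apply Fin.val_injective
  by_cases hp0 : (p:ℕ) = 0 <;> by_cases hq0 : (q:ℕ) = 0 <;>
    by_cases hp1 : (p:ℕ) = 1 <;> by_cases hq1 : (q:ℕ) = 1 <;>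
    simp only [hp0, hq0, hp1, hq1, if_true, if_false, reduceIte, if_neg (show ¬(1:ℕ)=0 by decide)] at h' ⊢
  all_goals first
    | omega
    | (exfalso;
       first
         | (have := liftV_pos ((x:ℕ)+2) (τ ⟨(p:ℕ)-2, by have := p.isLt; have := x.isLt; omega⟩); omega)
         | (have := liftV_pos ((x:ℕ)+2) (τ ⟨(q:ℕ)-2, by have := q.isLt; have := x.isLt; omega⟩); omega)
         | (have := liftV_ne ((x:ℕ)+2) (τ ⟨(p:ℕ)-2, by have := p.isLt; have := x.isLt; omega⟩); omega)
         | (have := liftV_ne ((x:ℕ)+2) (τ ⟨(q:ℕ)-2, by have := q.isLt; have := x.isLt; omega⟩); omega))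
    | (have hv := liftV_inj _ h'
       have hvv := τ.injective (Fin.val_injective hv)
       have := congrArg Fin.val hvv
       simp only at this
       omega)

noncomputable def build {m : ℕ} (x : Fin m) (τ : Equiv.Perm (Fin m)) : Equiv.Perm (Fin (m+2)) :=
  Equiv.ofBijective _ (Finite.injective_iff_bijective.mp (bFun_injective x τ))

lemma build_apply {m : ℕ} (x : Fin m) (τ : Equiv.Perm (Fin m)) (p : Fin (m+2)) :
    build x τ p = bFun x τ p := rfl

lemma entry_build_zero {m : ℕ} (x : Fin m) (τ : Equiv.Perm (Fin m)) :
    entry (build x τ) 0 = 0 := by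
  rw [entry_eq _ (show 0 < m + 2 by omega), build_apply]
  unfold bFun
  simp

lemma entry_build_one {m : ℕ} (x : Fin m) (τ : Equiv.Perm (Fin m)) :
    entry (build x τ) 1 = (x:ℕ) + 2 := by
  rw [entry_eq _ (show 1 < m + 2 by omega), build_apply]
  unfold bFun
  simp

lemma entry_build {m : ℕ} (x : Fin m) (τ : Equiv.Perm (Fin m)) {i : ℕ} (hi : i < m) :
    entry (build x τ) (i + 2) = liftV ((x:ℕ)+2) (entry τ i) := by
  rw [entry_eq _ (show i + 2 < m + 2 by omega), build_apply, entry_eq τ hi]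
  unfold bFun
  simp only [if_neg (show ¬(i+2) = 0 by omega), if_neg (show ¬(i+2) = 1 by omega)]
  have he : (⟨i + 2 - 2, by omega⟩ : Fin m) = ⟨i, hi⟩ := Fin.ext (by simp)
  rw [he]

def rFun {m : ℕ} (σ : Equiv.Perm (Fin (m+2))) (i : Fin m) : Fin m :=
  ⟨unliftV (entry σ 1) (entry σ ((i:ℕ)+2)), by
    have h1 := entry_lt (show 0 < m+2 by omega) σ 1
    have h2 := entry_lt (show 0 < m+2 by omega) σ ((i:ℕ)+2)
    have := i.isLt
    unfold unliftV; split_ifs <;> omega⟩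

lemma rFun_injective {m : ℕ} {σ : Equiv.Perm (Fin (m+2))}
    (h0 : entry σ 0 = 0) (hX : 2 ≤ entry σ 1) : Function.Injective (rFun σ) := by
  intro i j h
  have h' := congrArg Fin.val h
  unfold rFun at h'
  simp only at h'
  -- entries at positions i+2, j+2
  have hi2 : (i:ℕ) + 2 < m + 2 := by have := i.isLt; omega
  have hj2 : (j:ℕ) + 2 < m + 2 := by have := j.isLt; omega
  have hposi : 1 ≤ entry σ ((i:ℕ)+2) := by
    rcases Nat.eq_zero_or_pos (entry σ ((i:ℕ)+2)) with hz | hp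
    · have := entry_inj σ hi2 (by omega) (hz.trans h0.symm); omega
    · exact hp
  have hposj : 1 ≤ entry σ ((j:ℕ)+2) := by
    rcases Nat.eq_zero_or_pos (entry σ ((j:ℕ)+2)) with hz | hp
    · have := entry_inj σ hj2 (by omega) (hz.trans h0.symm); omega
    · exact hp
  have hnei : entry σ ((i:ℕ)+2) ≠ entry σ 1 := fun hh => by
    have := entry_inj σ hi2 (by omega) hh; omega
  have hnej : entry σ ((j:ℕ)+2) ≠ entry σ 1 := fun hh => by
    have := entry_inj σ hj2 (by omega) hh; omega
  have : entry σ ((i:ℕ)+2) = entry σ ((j:ℕ)+2) := by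
    have hl := liftV_unliftV hX hposi hnei
    have hl' := liftV_unliftV hX hposj hnej
    rw [← hl, ← hl', h']
  have := entry_inj σ hi2 hj2 this
  exact Fin.ext (by omega)

noncomputable def rPerm {m : ℕ} (σ : Equiv.Perm (Fin (m+2))) : Equiv.Perm (Fin m) :=
  if h : Function.Injective (rFun σ) then
    Equiv.ofBijective _ (Finite.injective_iff_bijective.mp h)
  else 1

lemma rPerm_apply {m : ℕ} {σ : Equiv.Perm (Fin (m+2))} (h : Function.Injective (rFun σ))
    (i : Fin m) : rPerm σ i = rFun σ i := by
  unfold rPerm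
  rw [dif_pos h]
  rfl

lemma entry_rPerm {m : ℕ} {σ : Equiv.Perm (Fin (m+2))} (h : Function.Injective (rFun σ))
    {i : ℕ} (hi : i < m) : entry (rPerm σ) i = unliftV (entry σ 1) (entry σ (i+2)) := by
  rw [entry_eq _ hi, rPerm_apply h]
  rfl

lemma liftV_zero {X : ℕ} (hX : 2 ≤ X) : liftV X 0 = 1 := by unfold liftV; split_ifs <;> omega

lemma liftV_ge (X v : ℕ) : v + 1 ≤ liftV X v := by unfold liftV; split_ifs <;> omega

lemma forward_mem {m k : ℕ} (hm : 1 ≤ m) {σ : Equiv.Perm (Fin (m+2))}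
    (hf : IsFlattened σ) (hrc : runCount σ = k) (hr2 : entry σ 2 < entry σ 1) :
    IsFlattened (rPerm σ) ∧ runCount (rPerm σ) = k - 1 := by
  have h0 : entry σ 0 = 0 := flat_entry_zero (by omega) hf
  obtain ⟨h21, hX2⟩ := cset_entries (by omega) hf hr2
  have hinj := rFun_injective h0 hX2
  have hpos : ∀ p, 1 ≤ p → p < m + 2 → 1 ≤ entry σ p := by
    intro p h1 h2
    rcases Nat.eq_zero_or_pos (entry σ p) with hz | hp
    · have := entry_inj σ h2 (by omega) (hz.trans h0.symm); omega
    · exact hp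
  have hneX : ∀ p, 2 ≤ p → p < m + 2 → entry σ p ≠ entry σ 1 := by
    intro p h1 h2 hh
    have := entry_inj σ h2 (by omega) hh; omega
  have hu : ∀ i < m, entry (rPerm σ) i = unliftV (entry σ 1) (entry σ (i+2)) :=
    fun i hi => entry_rPerm hinj hi
  have horder : ∀ i < m, ∀ j < m,
      (entry (rPerm σ) i < entry (rPerm σ) j ↔ entry σ (i+2) < entry σ (j+2)) := by
    intro i hi j hj
    rw [hu i hi, hu j hj]
    exact unliftV_lt_iff hX2 (hpos _ (by omega) (by omega)) (hneX _ (by omega) (by omega))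
      (hpos _ (by omega) (by omega)) (hneX _ (by omega) (by omega))
  have hstart : ∀ i, 1 ≤ i → i < m →
      (WordRunStart (entry (rPerm σ)) i ↔ WordRunStart (entry σ) (i+2)) := by
    intro i h1i him
    have e1 : i + 2 - 1 = (i - 1) + 2 := by omega
    have e2 : i - 1 + 1 = i := by omega
    constructor
    · rintro (h | h)
      · omega
      · right
        rw [e1]
        have hh : entry (rPerm σ) i < entry (rPerm σ) (i-1) := h
        exact (horder i him (i-1) (by omega)).mp hh
    · rintro (h | h)
      · omega
      · right
        rw [e1] at h
        exact (horder i him (i-1) (by omega)).mpr h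
  have hn1 : ¬ WordRunStart (entry σ) 1 := by
    rintro (h | h)
    · omega
    · simp only [Nat.sub_self, h0] at h; omega
  have h2s : WordRunStart (entry σ) 2 := Or.inr hr2
  have hruns : wordRuns (entry σ) (m+2) = wordRuns (entry (rPerm σ)) m + 1 :=
    wordRuns_succ hn1 h2s hstart
  constructor
  · intro i him j hjm hsi hsj hij
    by_cases hi0 : i = 0
    · subst hi0
      have hu0 : entry (rPerm σ) 0 = 0 := by
        rw [hu 0 him, h21, unliftV_one hX2]
      rw [hu0]
      -- show 0 < u j
      have hsj' : WordRunStart (entry σ) (j+2) := (hstart j (by omega) hjm).mp hsj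
      have hwj : 1 < entry σ (j+2) := by
        have := hf 2 (by omega) (j+2) (by omega) h2s hsj' (by omega)
        omega
      rw [hu j hjm]
      have := unliftV_pos hX2 (by omega) (hneX (j+2) (by omega) (by omega))
      omega
    · have hsi' : WordRunStart (entry σ) (i+2) := (hstart i (by omega) him).mp hsi
      have hsj' : WordRunStart (entry σ) (j+2) := (hstart j (by omega) hjm).mp hsj
      have := hf (i+2) (by omega) (j+2) (by omega) hsi' hsj' (by omega)
      exact (horder i him j hjm).mpr this
  · unfold runCount at hrc ⊢
    omega

lemma backward_mem {m k : ℕ} (hm : 1 ≤ m) (hk : 1 ≤ k) (x : Fin m) {τ : Equiv.Perm (Fin m)}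
    (hfτ : IsFlattened τ) (hrcτ : runCount τ = k - 1) :
    IsFlattened (build x τ) ∧ runCount (build x τ) = k ∧
      ¬ IsRunStart (build x τ) 1 ∧ IsRunStart (build x τ) 2 := by
  set σ := build x τ with hσ
  have hτ0 : entry τ 0 = 0 := flat_entry_zero hm hfτ
  have hw0 : entry σ 0 = 0 := entry_build_zero x τ
  have hw1 : entry σ 1 = (x:ℕ) + 2 := entry_build_one x τ
  have hwi : ∀ i < m, entry σ (i+2) = liftV ((x:ℕ)+2) (entry τ i) := fun i hi => entry_build x τ hi
  have hw2 : entry σ 2 = 1 := by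
    have := hwi 0 hm
    rw [hτ0, liftV_zero (by omega)] at this
    exact this
  have hn1 : ¬ WordRunStart (entry σ) 1 := by
    rintro (h | h)
    · omega
    · simp only [Nat.sub_self, hw0] at h; omega
  have h2s : WordRunStart (entry σ) 2 := by
    right
    show entry σ 2 < entry σ 1
    omega
  have hstart : ∀ i, 1 ≤ i → i < m →
      (WordRunStart (entry τ) i ↔ WordRunStart (entry σ) (i+2)) := by
    intro i h1i him
    have e1 : i + 2 - 1 = (i - 1) + 2 := by omega
    have hvi : entry σ (i+2) = liftV ((x:ℕ)+2) (entry τ i) := hwi i him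
    have hvi' : entry σ (i+2-1) = liftV ((x:ℕ)+2) (entry τ (i-1)) := by
      rw [e1]; exact hwi (i-1) (by omega)
    constructor
    · rintro (h | h)
      · omega
      · right
        rw [hvi, hvi']
        have e2 : i - 1 = i - 1 := rfl
        exact (liftV_lt_iff _).mpr h
    · rintro (h | h)
      · omega
      · right
        rw [hvi, hvi'] at h
        exact (liftV_lt_iff _).mp h
  have hruns : wordRuns (entry σ) (m+2) = wordRuns (entry τ) m + 1 :=
    wordRuns_succ hn1 h2s hstart
  refine ⟨?_, ?_, ?_, ?_⟩
  · intro i him j hjm hsi hsj hij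
    by_cases hj1 : j = 1
    · exact absurd (hj1 ▸ hsj) hn1
    by_cases hi0 : i = 0
    · subst hi0
      rw [hw0]
      by_cases hj2 : j = 2
      · rw [hj2, hw2]; omega
      · have hj3 : 3 ≤ j := by omega
        have ej : j = (j-2) + 2 := by omega
        rw [ej, hwi (j-2) (by omega)]
        have := liftV_pos ((x:ℕ)+2) (entry τ (j-2))
        omega
    by_cases hi1 : i = 1
    · exact absurd (hi1 ▸ hsi) hn1
    have hj3 : 3 ≤ j := by omega
    have ej : j = (j-2) + 2 := by omega
    have hsj' : WordRunStart (entry τ) (j-2) := by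
      apply (hstart (j-2) (by omega) (by omega)).mpr
      rw [← ej]; exact hsj
    have hτj : 1 ≤ entry τ (j-2) := by
      have := hfτ 0 hm (j-2) (by omega) (Or.inl rfl) hsj' (by omega)
      omega
    by_cases hi2 : i = 2
    · subst hi2
      rw [hw2, ej, hwi (j-2) (by omega)]
      have := liftV_ge ((x:ℕ)+2) (entry τ (j-2))
      omega
    · have hi3 : 3 ≤ i := by omega
      have ei : i = (i-2) + 2 := by omega
      have hsi' : WordRunStart (entry τ) (i-2) := by
        apply (hstart (i-2) (by omega) (by omega)).mpr
        rw [← ei]; exact hsi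
      have := hfτ (i-2) (by omega) (j-2) (by omega) hsi' hsj' (by omega)
      rw [ei, ej, hwi (i-2) (by omega), hwi (j-2) (by omega)]
      exact (liftV_lt_iff _).mpr this
  · unfold runCount at hrcτ ⊢
    omega
  · rintro ⟨-, h⟩
    exact hn1 h
  · exact ⟨by omega, h2s⟩

def xOf {m : ℕ} (hm : 1 ≤ m) (σ : Equiv.Perm (Fin (m+2))) : Fin m :=
  ⟨entry σ 1 - 2, by have := entry_lt (show 0 < m+2 by omega) σ 1; omega⟩

lemma perm_ext_of_entry {n : ℕ} {σ σ' : Equiv.Perm (Fin n)}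
    (h : ∀ i < n, entry σ i = entry σ' i) : σ = σ' := by
  apply Equiv.ext; intro p
  apply Fin.val_injective
  have hh := h p.val p.isLt
  rw [entry_eq _ p.isLt, entry_eq _ p.isLt] at hh
  simpa using hh

lemma left_inv {m : ℕ} (hm : 1 ≤ m) {σ : Equiv.Perm (Fin (m+2))}
    (hf : IsFlattened σ) (hr2 : entry σ 2 < entry σ 1) :
    build (xOf hm σ) (rPerm σ) = σ := by
  have h0 : entry σ 0 = 0 := flat_entry_zero (by omega) hf
  obtain ⟨h21, hX2⟩ := cset_entries (by omega) hf hr2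
  have hinj := rFun_injective h0 hX2
  have hxv : ((xOf hm σ : Fin m) : ℕ) + 2 = entry σ 1 := by
    show (entry σ 1 - 2) + 2 = entry σ 1
    omega
  apply perm_ext_of_entry
  intro p hp
  by_cases hp0 : p = 0
  · rw [hp0, entry_build_zero, h0]
  by_cases hp1 : p = 1
  · rw [hp1, entry_build_one, hxv]
  · have ep : p = (p - 2) + 2 := by omega
    rw [ep, entry_build _ _ (show p - 2 < m by omega),
      entry_rPerm hinj (show p - 2 < m by omega), hxv, ← ep]
    have hpos : 1 ≤ entry σ p := by
      rcases Nat.eq_zero_or_pos (entry σ p) with hz | hpp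
      · have := entry_inj σ hp (by omega) (hz.trans h0.symm); omega
      · exact hpp
    have hne : entry σ p ≠ entry σ 1 := fun hh => by
      have := entry_inj σ hp (by omega) hh; omega
    exact liftV_unliftV hX2 hpos hne

lemma xOf_build {m : ℕ} (hm : 1 ≤ m) (x : Fin m) (τ : Equiv.Perm (Fin m)) :
    xOf hm (build x τ) = x := by
  apply Fin.val_injective
  show entry (build x τ) 1 - 2 = (x : ℕ)
  rw [entry_build_one]
  omega

lemma rPerm_build {m : ℕ} (x : Fin m) (τ : Equiv.Perm (Fin m)) :
    rPerm (build x τ) = τ := by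
  have hfr : rFun (build x τ) = ⇑τ := by
    funext i
    apply Fin.val_injective
    show unliftV (entry (build x τ) 1) (entry (build x τ) ((i:ℕ)+2)) = ((τ i : Fin m) : ℕ)
    rw [entry_build_one, entry_build x τ i.isLt, unliftV_liftV, entry_eq τ i.isLt]
  have hinj : Function.Injective (rFun (build x τ)) := hfr ▸ τ.injective
  apply Equiv.ext; intro i
  rw [rPerm_apply hinj, hfr]

/-- For all integers `n`, `k` with `2 ≤ k < n`, the cardinality of `C_{n,k}` is
`(n - 2) ⬝ f_{n-2, k-1}`. -/
theorem card_Cset (n k : ℕ) (hk : 2 ≤ k) (hkn : k < n) :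
    (Cset n k).card = (n - 2) * f (n - 2) (k - 1) := by
  obtain ⟨m, rfl⟩ : ∃ m, n = m + 2 := ⟨n - 2, by omega⟩
  have hm : 1 ≤ m := by omega
  have hsub : m + 2 - 2 = m := by omega
  rw [hsub]
  have hcard : ((Finset.univ : Finset (Fin m)) ×ˢ flatSet m (k-1)).card = m * f m (k-1) := by
    rw [Finset.card_product]
    simp [f]
  rw [← hcard]
  apply Finset.card_nbij' (i := fun σ => (xOf hm σ, rPerm σ)) (j := fun p => build p.1 p.2)
  · intro σ hσ
    have hσ : σ ∈ Cset (m + 2) k := hσ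
    rw [Cset, Finset.mem_filter, flatSet, Finset.mem_filter] at hσ
    obtain ⟨⟨-, hf, hrc⟩, -, -, hr2⟩ := hσ
    have hr2' : entry σ 2 < entry σ 1 := by
      rcases hr2 with h | h
      · omega
      · exact h
    obtain ⟨hfr, hrr⟩ := forward_mem hm hf hrc hr2'
    rw [Finset.mem_coe, Finset.mem_product, flatSet, Finset.mem_filter]
    exact ⟨Finset.mem_univ _, Finset.mem_univ _, hfr, hrr⟩
  · intro p hp
    have hp : p ∈ (Finset.univ : Finset (Fin m)) ×ˢ flatSet m (k-1) := hp
    rw [Finset.mem_product, flatSet, Finset.mem_filter] at hp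
    obtain ⟨-, -, hfτ, hrcτ⟩ := hp
    obtain ⟨hfσ, hrcσ, hn1, h2s⟩ := backward_mem hm (by omega) p.1 hfτ hrcτ
    rw [Finset.mem_coe, Cset, Finset.mem_filter, flatSet, Finset.mem_filter]
    exact ⟨⟨Finset.mem_univ _, hfσ, hrcσ⟩, hn1, h2s⟩
  · intro σ hσ
    have hσ : σ ∈ Cset (m + 2) k := hσ
    rw [Cset, Finset.mem_filter, flatSet, Finset.mem_filter] at hσ
    obtain ⟨⟨-, hf, -⟩, -, -, hr2⟩ := hσ
    have hr2' : entry σ 2 < entry σ 1 := by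
      rcases hr2 with h | h
      · omega
      · exact h
    exact left_inv hm hf hr2'
  · intro p hp
    exact Prod.ext (xOf_build hm p.1 p.2) (rPerm_build p.1 p.2)
end
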